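/- Let p : Y → X be a surjective local homeomorphism with X locally path connected and semilocally simply connected and Y Hausdorff. If Y admits an action of the fundamental groupoid Π₁(X) with momentum map p (i.e., a functorial continuous action where [γ] maps p⁻¹(γ(0)) to p⁻¹(γ(1))), then p is a covering map. -/

import Mathlib

attribute [local instance] Path.Homotopic.setoid

/-- If the loop `γ.trans γ'.symm` is null-homotopic, then `γ` and `γ'` are homotopic. -/
lemma cancel_homotopic_of_loop {X : Type*} [TopologicalSpace X] {x u : X}
    {γ γ' : Path x u} (h : (γ.trans γ'.symm).Homotopic (Path.refl x)) : γ.Homotopic γ' := by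
  have h1 : γ.Homotopic (γ.trans (Path.refl u)) := ⟨(Path.Homotopy.transRefl γ).symm⟩
  have h2 : (γ.trans (Path.refl u)).Homotopic (γ.trans (γ'.symm.trans γ')) :=
    Path.Homotopic.hcomp (Path.Homotopic.refl γ) ⟨Path.Homotopy.reflSymmTrans γ'⟩
  have h3 : (γ.trans (γ'.symm.trans γ')).Homotopic ((γ.trans γ'.symm).trans γ') :=
    ⟨(Path.Homotopy.transAssoc γ γ'.symm γ').symm⟩
  have h4 : ((γ.trans γ'.symm).trans γ').Homotopic ((Path.refl x).trans γ') :=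
    Path.Homotopic.hcomp h (Path.Homotopic.refl γ')
  have h5 : ((Path.refl x).trans γ').Homotopic γ' := ⟨Path.Homotopy.reflTrans γ'⟩
  exact (((h1.trans h2).trans h3).trans h4).trans h5

/-- Let `p : Y → X` be a surjective local homeomorphism with `Y`
Hausdorff and `X` locally path connected and semilocally simply connected. If `Y`
carries a (continuous, functorial) action of the fundamental groupoid `Π₁(X)` with
momentum map `p`, then `p` is a covering map. -/
theorem covering_of_fundamental_groupoid_action {X Y : Type*} [TopologicalSpace X]
    [TopologicalSpace Y] [T2Space Y] [LocallyPathConnectedSpace X]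
    (hslsc : ∀ x : X, ∃ U ∈ nhds x, ∀ (z : X) (γ : Path z z),
      Set.range γ ⊆ U → γ.Homotopic (Path.refl z))
    {p : Y → X} (hp : IsLocalHomeomorph p) (hsurj : Function.Surjective p)
    (act : ∀ {x x' : X}, Path.Homotopic.Quotient x x' → Y → Y)
    (hmom : ∀ {x x' : X} (γ : Path x x') (y : Y), p y = x → p (act ⟦γ⟧ y) = x')
    (hid : ∀ (x : X) (y : Y), p y = x → act ⟦Path.refl x⟧ y = y)
    (hcomp : ∀ {x x' x'' : X} (γ : Path x x') (δ : Path x' x'') (y : Y), p y = x →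
      act ⟦γ.trans δ⟧ y = act ⟦δ⟧ (act ⟦γ⟧ y))
    (hcont : ∀ {x x' : X} (γ : Path x x') (y : Y), p y = x →
      Continuous fun t : unitInterval => act ⟦γ.truncate 0 (t : ℝ)⟧ y) :
    IsCoveringMap p := by
  classical
  -- basic consequences of the action axioms
  have acongr : ∀ {a b a' b' : X} (γ : Path a b) (γ' : Path a' b') (ha : a = a') (hb : b = b'),
      (∀ t, γ t = γ' t) → ∀ y : Y, act ⟦γ⟧ y = act ⟦γ'⟧ y := by
    intro a b a' b' γ γ' ha hb hpt y
    subst ha; subst hb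
    have : γ = γ' := by ext t; exact hpt t
    rw [this]
  have hcancel : ∀ {a b : X} (γ : Path a b) (y : Y), p y = a →
      act ⟦γ.symm⟧ (act ⟦γ⟧ y) = y := by
    intro a b γ y hy
    rw [← hcomp γ γ.symm y hy,
      Quotient.sound (⟨(Path.Homotopy.reflTransSymm γ).symm⟩ :
        (γ.trans γ.symm).Homotopic (Path.refl a))]
    exact hid a y hy
  have hcancel' : ∀ {a b : X} (γ : Path a b) (z : Y), p z = b →
      act ⟦γ⟧ (act ⟦γ.symm⟧ z) = z := by
    intro a b γ z hz
    have := hcancel γ.symm z hz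
    rwa [Path.symm_symm] at this
  -- the path lifting lemma: the action along a path lying in the target of a chart
  -- containing the starting point is given by the inverse of the chart
  have hlift : ∀ {a b : X} (δ : Path a b) (z : Y), p z = a → ∀ (e : OpenPartialHomeomorph Y X),
      p = e → z ∈ e.source → (∀ t, δ t ∈ e.target) → act ⟦δ⟧ z = e.symm b := by
    intro a b δ z hz e hpe hze hδ
    set L : unitInterval → Y := fun t => act ⟦δ.truncate 0 (t : ℝ)⟧ z with hLdef
    have hLcont : Continuous L := hcont δ z hz
    have hsrc : ∀ t : unitInterval, δ.extend (min 0 (t : ℝ)) = a := by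
      intro t; rw [min_eq_left t.2.1, Path.extend_zero]
    have hpL : ∀ t : unitInterval, p (L t) = δ t := by
      intro t
      have h1 := hmom (δ.truncate 0 (t : ℝ)) z (hz.trans (hsrc t).symm)
      exact h1.trans (δ.extend_extends' t)
    set M : unitInterval → Y := fun t => e.symm (δ t) with hMdef
    have hMcont : Continuous M := e.continuousOn_symm.comp_continuous δ.continuous hδ
    have hpM : ∀ t, p (M t) = δ t := fun t => by
      rw [hpe]; exact e.right_inv (hδ t)
    have hS : IsClopen {t | L t = M t} := by
      constructor
      · exact isClosed_eq hLcont hMcont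
      · rw [isOpen_iff_mem_nhds]
        intro t ht
        have ht : L t = M t := ht
        obtain ⟨e', he'mem, hpe'⟩ := hp (L t)
        have hMt : M t ∈ e'.source := ht ▸ he'mem
        filter_upwards [hLcont.continuousAt.preimage_mem_nhds
            (e'.open_source.mem_nhds he'mem),
          hMcont.continuousAt.preimage_mem_nhds (e'.open_source.mem_nhds hMt)]
          with s hsL hsM
        refine e'.injOn hsL hsM ?_
        show e' (L s) = e' (M s)
        rw [← hpe', hpL, hpM]
    have h0 : L 0 = M 0 := by
      have hL0 : L 0 = z := by
        have h := acongr (δ.truncate 0 ((0 : unitInterval) : ℝ)) (Path.refl a)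
          (hsrc 0)
          (by rw [show (((0 : unitInterval)) : ℝ) = 0 from rfl, Path.extend_zero])
          (fun t => by
            show δ.extend (min (max (t : ℝ) 0) ((0 : unitInterval) : ℝ)) = a
            rw [show (((0 : unitInterval)) : ℝ) = 0 from rfl, max_eq_left t.2.1,
              min_eq_right t.2.1, Path.extend_zero]) z
        exact h.trans (hid a z hz)
      have hM0 : M 0 = z := by
        have hez : e z = a := by rw [← hpe]; exact hz
        show e.symm (δ 0) = z
        rw [Path.source, ← hez, e.left_inv hze]
      rw [hL0, hM0]
    have huniv : {t | L t = M t} = Set.univ := hS.eq_univ ⟨0, h0⟩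
    have h1 : L 1 = M 1 := by
      have : (1 : unitInterval) ∈ {t | L t = M t} := huniv ▸ Set.mem_univ _
      exact this
    have hL1 : L 1 = act ⟦δ⟧ z := by
      exact acongr (δ.truncate 0 ((1 : unitInterval) : ℝ)) δ
        (hsrc 1)
        (by rw [show (((1 : unitInterval)) : ℝ) = 1 from rfl, Path.extend_one])
        (fun t => by
          show δ.extend (min (max (t : ℝ) 0) ((1 : unitInterval) : ℝ)) = δ t
          rw [show (((1 : unitInterval)) : ℝ) = 1 from rfl, max_eq_left t.2.1,
            min_eq_left t.2.2, δ.extend_extends']) z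
    have hM1 : M 1 = e.symm b := by
      show e.symm (δ 1) = e.symm b
      rw [Path.target]
    rw [← hL1, h1, hM1]
  -- now the main argument
  intro x
  obtain ⟨U, hU, hloop⟩ := hslsc x
  obtain ⟨W, hWU, hWopen, hxW⟩ := mem_nhds_iff.mp hU
  set V := pathComponentIn W x with hVdef
  have hVopen : IsOpen V := hWopen.pathComponentIn x
  have hxV : x ∈ V := mem_pathComponentIn_self hxW
  have hVpc : IsPathConnected V := isPathConnected_pathComponentIn hxW
  have hVU : V ⊆ U := pathComponentIn_subset.trans hWU
  -- choose paths from `x` to points of `V` inside `V`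
  have hjoin : ∀ u ∈ V, ∃ γ : Path x u, ∀ t, γ t ∈ V := fun u hu =>
    hVpc.joinedIn x hxV u hu
  choose Γ hΓ using hjoin
  -- well-definedness: any path in `V` from `x` to `u` is homotopic to the chosen one
  have hwd : ∀ {u : X} (hu : u ∈ V) (γ : Path x u), (∀ t, γ t ∈ V) →
      (⟦γ⟧ : Path.Homotopic.Quotient x u) = ⟦Γ u hu⟧ := by
    intro u hu γ hγ
    refine Quotient.sound (cancel_homotopic_of_loop (hloop x _ ?_))
    have : Set.range (γ.trans (Γ u hu).symm) ⊆ V := by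
      rw [Path.trans_range, Path.symm_range]
      rintro z (⟨t, rfl⟩ | ⟨t, rfl⟩)
      exacts [hγ t, hΓ u hu t]
    exact this.trans hVU
  -- the fiber over `x`
  obtain ⟨y₀', hy₀'⟩ := hsurj x
  have hFdis : DiscreteTopology ↥(p ⁻¹' {x}) := by
    rw [discreteTopology_iff_isOpen_singleton]
    intro y
    obtain ⟨e, hye, hpe⟩ := hp (y : Y)
    have hset : {y} = (Subtype.val : ↥(p ⁻¹' {x}) → Y) ⁻¹' e.source := by
      ext z
      simp only [Set.mem_singleton_iff, Set.mem_preimage]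
      constructor
      · rintro rfl; exact hye
      · intro hz
        refine Subtype.ext (e.injOn hz hye ?_)
        show e (z : Y) = e (y : Y)
        rw [← hpe]
        have hz' : p (z : Y) = x := z.2
        have hy' : p (y : Y) = x := y.2
        rw [hz', hy']
    rw [hset]
    exact e.open_source.preimage continuous_subtype_val
  -- the fiber map
  have memF : ∀ {u : X} (hu : u ∈ V) (z : Y), p z = u →
      act ⟦(Γ u hu).symm⟧ z ∈ p ⁻¹' {x} := by
    intro u hu z hz
    exact hmom (Γ u hu).symm z hz
  set fib : Y → ↥(p ⁻¹' {x}) := fun z =>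
    if h : p z ∈ V then ⟨act ⟦(Γ (p z) h).symm⟧ z, memF h z rfl⟩ else ⟨y₀', hy₀'⟩ with hfibdef
  have fib_spec : ∀ (z : Y) (h : p z ∈ V), (fib z : Y) = act ⟦(Γ (p z) h).symm⟧ z := by
    intro z h
    rw [hfibdef]
    simp only [dif_pos h]
  have fib_eq : ∀ (u : X) (hu : u ∈ V) (y : ↥(p ⁻¹' {x})),
      fib (act ⟦Γ u hu⟧ (y : Y)) = y := by
    intro u hu y
    have hy : p (y : Y) = x := y.2
    have hz : p (act ⟦Γ u hu⟧ (y : Y)) = u := hmom _ _ hy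
    have h' : p (act ⟦Γ u hu⟧ (y : Y)) ∈ V := by rw [hz]; exact hu
    refine Subtype.ext ?_
    rw [fib_spec _ h']
    revert h'
    rw [hz]
    intro h'
    exact hcancel (Γ u h') (y : Y) hy
  -- local identification of the sections with chart inverses
  have hC1 : ∀ (y : Y), p y = x → ∀ {u₀ : X} (h₀ : u₀ ∈ V),
      ∃ (e : OpenPartialHomeomorph Y X) (V' : Set X), p = e ∧ act ⟦Γ u₀ h₀⟧ y ∈ e.source ∧
        IsOpen V' ∧ u₀ ∈ V' ∧ V' ⊆ V ∧ V' ⊆ e.target ∧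
        ∀ u (hu : u ∈ V), u ∈ V' → act ⟦Γ u hu⟧ y = e.symm u := by
    intro y hy u₀ h₀
    have hpz₀ : p (act ⟦Γ u₀ h₀⟧ y) = u₀ := hmom _ y hy
    obtain ⟨e, hze, hpe⟩ := hp (act ⟦Γ u₀ h₀⟧ y)
    have hu₀t : u₀ ∈ e.target := by
      rw [← hpz₀, hpe]; exact e.map_source hze
    have hmem : u₀ ∈ V ∩ e.target := ⟨h₀, hu₀t⟩
    set V' := pathComponentIn (V ∩ e.target) u₀ with hV'def
    have hV'open : IsOpen V' := (hVopen.inter e.open_target).pathComponentIn _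
    have hV'pc : IsPathConnected V' := isPathConnected_pathComponentIn hmem
    have hV'sub : V' ⊆ V ∩ e.target := pathComponentIn_subset
    refine ⟨e, V', hpe, hze, hV'open, mem_pathComponentIn_self hmem,
      fun u hu => (hV'sub hu).1, fun u hu => (hV'sub hu).2, ?_⟩
    intro u hu huV'
    obtain ⟨δ, hδ⟩ := hV'pc.joinedIn u₀ (mem_pathComponentIn_self hmem) u huV'
    have hkey : (⟦Γ u hu⟧ : Path.Homotopic.Quotient x u) = ⟦(Γ u₀ h₀).trans δ⟧ := by
      refine (hwd hu ((Γ u₀ h₀).trans δ) ?_).symm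
      have : Set.range ((Γ u₀ h₀).trans δ) ⊆ V := by
        rw [Path.trans_range]
        rintro z (⟨t, rfl⟩ | ⟨t, rfl⟩)
        exacts [hΓ u₀ h₀ t, (hV'sub (hδ t)).1]
      exact fun t => this ⟨t, rfl⟩
    rw [hkey, hcomp _ _ y hy]
    exact hlift δ _ hpz₀ e hpe hze (fun t => (hV'sub (hδ t)).2)
  -- continuity of the fiber map on `p ⁻¹' V`
  have htoFun : ContinuousOn (fun z => ((p z, fib z) : X × ↥(p ⁻¹' {x}))) (p ⁻¹' V) := by
    refine continuousOn_of_forall_continuousAt ?_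
    intro z₀ hz₀
    have hz₀ : p z₀ ∈ V := hz₀
    refine (hp.continuous.continuousAt).prodMk ?_
    set y₀ := fib z₀ with hy₀def
    have hy₀x : p (y₀ : Y) = x := y₀.2
    have hz₀eq : z₀ = act ⟦Γ (p z₀) hz₀⟧ (y₀ : Y) := by
      rw [hy₀def, fib_spec z₀ hz₀]
      exact (hcancel' (Γ (p z₀) hz₀) z₀ rfl).symm
    obtain ⟨e, V', hpe, hsrc, hV'open, hu₀V', hV'V, hV'tgt, hsec⟩ := hC1 (y₀ : Y) hy₀x hz₀
    have hz₀src : z₀ ∈ e.source := hz₀eq ▸ hsrc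
    have hev : fib =ᶠ[nhds z₀] fun _ => y₀ := by
      filter_upwards [(e.open_source.inter
        (hV'open.preimage hp.continuous)).mem_nhds ⟨hz₀src, hu₀V'⟩] with z hz
      obtain ⟨hzsrc, hzV'⟩ := hz
      have hzV : p z ∈ V := hV'V hzV'
      have hze2 : act ⟦Γ (p z) hzV⟧ (y₀ : Y) = z := by
        rw [hsec (p z) hzV hzV', hpe]
        exact e.left_inv hzsrc
      have := fib_eq (p z) hzV y₀
      rwa [hze2] at this
    exact hev.continuousAt
  -- continuity of the inverse
  have hinv : ContinuousOn
      (fun w : X × ↥(p ⁻¹' {x}) =>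
        if h : w.1 ∈ V then act ⟦Γ w.1 h⟧ (w.2 : Y) else (w.2 : Y))
      (V ×ˢ (Set.univ : Set ↥(p ⁻¹' {x}))) := by
    refine continuousOn_of_forall_continuousAt ?_
    rintro ⟨u₀, y₀⟩ ⟨h₀, -⟩
    obtain ⟨e, V', hpe, hsrc, hV'open, hu₀V', hV'V, hV'tgt, hsec⟩ := hC1 (y₀ : Y) y₀.2 h₀
    have hevt : (fun w : X × ↥(p ⁻¹' {x}) =>
        if h : w.1 ∈ V then act ⟦Γ w.1 h⟧ (w.2 : Y) else (w.2 : Y)) =ᶠ[nhds (u₀, y₀)]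
        fun w => e.symm w.1 := by
      have hN : V' ×ˢ ({y₀} : Set ↥(p ⁻¹' {x})) ∈ nhds (u₀, y₀) :=
        prod_mem_nhds (hV'open.mem_nhds hu₀V')
          ((discreteTopology_iff_isOpen_singleton.mp hFdis y₀).mem_nhds rfl)
      filter_upwards [hN] with w hw
      obtain ⟨hw1, hw2⟩ := hw
      have hw2 : w.2 = y₀ := hw2
      have hw1V : w.1 ∈ V := hV'V hw1
      rw [dif_pos hw1V, hw2]
      exact hsec w.1 hw1V hw1
    have hc : ContinuousAt (fun w : X × ↥(p ⁻¹' {x}) => e.symm w.1) (u₀, y₀) :=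
      (e.continuousAt_symm (hV'tgt hu₀V')).comp continuousAt_fst
    exact hc.congr hevt.symm
  -- assemble the trivialization
  haveI := hFdis
  refine IsEvenlyCovered.of_trivialization (t :=
          { toFun := fun z => (p z, fib z)
            invFun := fun w => if h : w.1 ∈ V then act ⟦Γ w.1 h⟧ (w.2 : Y) else (w.2 : Y)
            source := p ⁻¹' V
            target := V ×ˢ (Set.univ : Set ↥(p ⁻¹' {x}))
            map_source' := fun z hz => ⟨hz, Set.mem_univ _⟩
            map_target' := ?_
            left_inv' := ?_
            right_inv' := ?_
            open_source := hVopen.preimage hp.continuous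
            open_target := hVopen.prod isOpen_univ
            continuousOn_toFun := htoFun
            continuousOn_invFun := hinv
            baseSet := V
            open_baseSet := hVopen
            source_eq := rfl
            target_eq := rfl
            proj_toFun := fun z _ => rfl }) hxV
  · rintro ⟨u, y⟩ ⟨hu, -⟩
    show (if h : u ∈ V then act ⟦Γ u h⟧ (y : Y) else (y : Y)) ∈ p ⁻¹' V
    rw [dif_pos hu]
    show p (act ⟦Γ u hu⟧ (y : Y)) ∈ V
    rw [hmom (Γ u hu) (y : Y) y.2]
    exact hu
  · intro z hz
    have hz : p z ∈ V := hz
    show (if h : p z ∈ V then act ⟦Γ (p z) h⟧ ((fib z : Y)) else ((fib z : Y))) = z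
    rw [dif_pos hz, fib_spec z hz]
    exact hcancel' (Γ (p z) hz) z rfl
  · rintro ⟨u, y⟩ ⟨hu, -⟩
    show (fun z => ((p z, fib z) : X × ↥(p ⁻¹' {x})))
      (if h : u ∈ V then act ⟦Γ u h⟧ (y : Y) else (y : Y)) = (u, y)
    rw [dif_pos hu]
    refine Prod.ext ?_ ?_
    · exact hmom (Γ u hu) (y : Y) y.2
    · exact fib_eq u hu y
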